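/- arXiv:2012.07054 — 2 statements merged into one kernel-verified Lean document; each statement's English description precedes it below -/
import Mathlib

section
/- Let f : ℝⁿ → ℝ be convex and μ-smooth with whitened sketch matrix Q_S = U_S V_Sᵀ, where S = U_S Σ_S V_Sᵀ is a thin SVD of a d×m matrix S of rank m. Let α†* minimize α ↦ f(AQ_S α) + (λ/2)‖α‖². Then α* := V_S Σ_S^{-1} V_Sᵀ α†* minimizes α ↦ f(ASα) + (λ/2)‖Sα‖², and moreover Q_S α†* = S α*; consequently the zero-order estimators S α* and Q_S α†* coincide, as do the first-order estimators -(1/λ)Aᵀ∇f(ASα*) and -(1/λ)Aᵀ∇f(AQ_S α†*). -/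
open scoped RealInnerProductSpace
open Matrix MeasureTheory ProbabilityTheory

noncomputable section

abbrev EuclR (n : ℕ) := EuclideanSpace ℝ (Fin n)

def matVec {p q : ℕ} (M : Matrix (Fin p) (Fin q) ℝ) (x : EuclR q) : EuclR p :=
  Matrix.toEuclideanLin M x

def matCLM {p q : ℕ} (M : Matrix (Fin p) (Fin q) ℝ) : EuclR q →L[ℝ] EuclR p :=
  LinearMap.toContinuousLinearMap (Matrix.toEuclideanLin M)

def ranM {p q : ℕ} (M : Matrix (Fin p) (Fin q) ℝ) : Submodule ℝ (EuclR p) :=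
  LinearMap.range (Matrix.toEuclideanLin M)

def projOn {p : ℕ} (K : Submodule ℝ (EuclR p)) (x : EuclR p) : EuclR p :=
  (K.orthogonalProjectionOnto x : EuclR p)

def perpCLM {p : ℕ} (K : Submodule ℝ (EuclR p)) : EuclR p →L[ℝ] EuclR p :=
  ContinuousLinearMap.id ℝ (EuclR p) - K.subtypeL.comp K.orthogonalProjectionOnto

def fconj {p : ℕ} (f : EuclR p → ℝ) (z : EuclR p) : EReal :=
  ⨆ w : EuclR p, ((⟪w, z⟫ - f w : ℝ) : EReal)

def fdom {p : ℕ} (f : EuclR p → ℝ) : Set (EuclR p) := {z | fconj f z ≠ ⊤}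

def tcone {p : ℕ} (f : EuclR p → ℝ) (z : EuclR p) : Set (EuclR p) :=
  {Δ | ∃ t : ℝ, 0 ≤ t ∧ ∃ y ∈ fdom f, Δ = t • (y - z)}

def ZfVal {n d m : ℕ} (f : EuclR n → ℝ) (zs : EuclR n)
    (A : Matrix (Fin n) (Fin d) ℝ) (S : Matrix (Fin d) (Fin m) ℝ) : ℝ :=
  sSup ((fun Δ => ‖matVec Aᵀ Δ - projOn (ranM S) (matVec Aᵀ Δ)‖) ''
    (tcone f zs ∩ Metric.closedBall 0 1))

lemma matVec_mul {p q r : ℕ} (M : Matrix (Fin p) (Fin q) ℝ) (N : Matrix (Fin q) (Fin r) ℝ)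
    (x : EuclR r) : matVec (M * N) x = matVec M (matVec N x) := by
  simp [matVec, Matrix.toEuclideanLin_apply, Matrix.mulVec_mulVec]

lemma matVec_one {p : ℕ} (x : EuclR p) : matVec (1 : Matrix (Fin p) (Fin p) ℝ) x = x := by
  simp [matVec, Matrix.toEuclideanLin_apply]

lemma norm_matVec_of_orth {p q : ℕ} (Q : Matrix (Fin p) (Fin q) ℝ) (h : Qᵀ * Q = 1)
    (x : EuclR q) : ‖matVec Q x‖ = ‖x‖ := by
  have h1 : ⟪matVec Q x, matVec Q x⟫ = ⟪x, x⟫ := by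
    have := Matrix.toEuclideanLin_conjTranspose_eq_adjoint Q
    have h2 : matVec Qᵀ (matVec Q x) = x := by
      rw [← matVec_mul, h, matVec_one]
    calc ⟪matVec Q x, matVec Q x⟫
        = ⟪x, (LinearMap.adjoint (Matrix.toEuclideanLin Q)) (matVec Q x)⟫ := by
          rw [LinearMap.adjoint_inner_right]; rfl
      _ = ⟪x, x⟫ := by
          rw [← this, Matrix.conjTranspose_eq_transpose_of_trivial]
          exact congrArg _ h2
  have := real_inner_self_eq_norm_sq (matVec Q x)
  have h3 := real_inner_self_eq_norm_sq x
  nlinarith [norm_nonneg (matVec Q x), norm_nonneg x]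

/-- equivalence of the whitened and the original sketched programs. -/
theorem whitened_sketch_equivalence (n d m : ℕ) (f : EuclR n → ℝ) (μ lam : ℝ)
    (hμ : 0 < μ) (hlam : 0 < lam)
    (hconv : ConvexOn ℝ Set.univ f)
    (hdiff : ∀ x, HasGradientAt f (gradient f x) x)
    (hsmooth : ∀ x y, ‖gradient f y - gradient f x‖ ≤ μ * ‖y - x‖)
    (A : Matrix (Fin n) (Fin d) ℝ)
    (S US : Matrix (Fin d) (Fin m) ℝ) (SgS VS : Matrix (Fin m) (Fin m) ℝ)
    (hSVD : S = US * SgS * VSᵀ) (hUS : USᵀ * US = 1)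
    (hVS : VSᵀ * VS = 1) (hVS' : VS * VSᵀ = 1)
    (hSgdiag : SgS.IsDiag) (hSginv : IsUnit SgS.det)
    (Q : Matrix (Fin d) (Fin m) ℝ) (hQ : Q = US * VSᵀ)
    (αdag : EuclR m)
    (hαdag : ∀ α, f (matVec (A * Q) αdag) + lam / 2 * ‖αdag‖ ^ 2
        ≤ f (matVec (A * Q) α) + lam / 2 * ‖α‖ ^ 2)
    (αs : EuclR m) (hαs : αs = matVec (VS * SgS⁻¹ * VSᵀ) αdag) :
    (∀ α, f (matVec (A * S) αs) + lam / 2 * ‖matVec S αs‖ ^ 2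
        ≤ f (matVec (A * S) α) + lam / 2 * ‖matVec S α‖ ^ 2) ∧
    matVec Q αdag = matVec S αs ∧
    (-(1 / lam)) • matVec Aᵀ (gradient f (matVec (A * S) αs))
      = (-(1 / lam)) • matVec Aᵀ (gradient f (matVec (A * Q) αdag)) := by
  have hSg : SgS * SgS⁻¹ = 1 := Matrix.mul_nonsing_inv SgS hSginv
  have hSQ : S * (VS * SgS⁻¹ * VSᵀ) = Q := by
    rw [hSVD, hQ]
    simp only [Matrix.mul_assoc]
    rw [← Matrix.mul_assoc VSᵀ VS, hVS, Matrix.one_mul,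
      ← Matrix.mul_assoc SgS, hSg, Matrix.one_mul]
  have hQS : Q * (VS * SgS * VSᵀ) = S := by
    rw [hSVD, hQ]
    simp only [Matrix.mul_assoc]
    rw [← Matrix.mul_assoc VSᵀ VS, hVS, Matrix.one_mul]
  have hQtQ : Qᵀ * Q = 1 := by
    rw [hQ, Matrix.transpose_mul, Matrix.transpose_transpose]
    simp only [Matrix.mul_assoc]
    rw [← Matrix.mul_assoc USᵀ US, hUS, Matrix.one_mul, hVS']
  have hSQ' : matVec S αs = matVec Q αdag := by
    rw [hαs, ← matVec_mul, hSQ]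
  have hASQ : matVec (A * S) αs = matVec (A * Q) αdag := by
    rw [matVec_mul, matVec_mul, hSQ']
  refine ⟨?_, hSQ'.symm, by rw [hASQ]⟩
  intro α
  have hSα : matVec S α = matVec Q (matVec (VS * SgS * VSᵀ) α) := by
    rw [← matVec_mul, hQS]
  have h1 : ‖matVec S αs‖ = ‖αdag‖ := by rw [hSQ', norm_matVec_of_orth Q hQtQ]
  have h2 : ‖matVec S α‖ = ‖matVec (VS * SgS * VSᵀ) α‖ := by
    rw [hSα, norm_matVec_of_orth Q hQtQ]
  have h3 : matVec (A * S) α = matVec (A * Q) (matVec (VS * SgS * VSᵀ) α) := by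
    rw [matVec_mul, matVec_mul, hSα]
  rw [hASQ, h1, h2, h3]
  exact hαdag _
end
end

section
/- Fix K ∈ {1,...,ρ} such that σ_K² > ‖P_{AS}^⊥A‖₂², set δ_K = √(σ_K² - ‖P_{AS}^⊥A‖₂²), and let 0 < δ < δ_K. Then there exist points x₁,...,x_M in the Euclidean unit ball of ℝᵈ with M ≥ 2^K such that ‖P_{AS}A(x_j - x_k)‖ > δ/2 for all j ≠ k, and ‖P_{AS}A(x_j - x_k)‖ ≤ 2δ for all j, k. -/
open scoped RealInnerProductSpace
open Matrix MeasureTheory ProbabilityTheory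

noncomputable section

/-- The eigenvalues of a Hermitian real matrix sorted in descending order. -/
def eigDesc {p : ℕ} {M : Matrix (Fin p) (Fin p) ℝ} (hM : M.IsHermitian) : Fin p → ℝ :=
  fun j => (hM.eigenvalues ∘ Tuple.sort hM.eigenvalues) j.rev

open Metric in
/-- A uniformly separated subset of a compact set is finite. -/
lemma sep_finite {α : Type*} [MetricSpace α] {s c : Set α} (hc : IsCompact c)
    (hsc : s ⊆ c) {ε : ℝ} (hε : 0 < ε)
    (hsep : s.Pairwise fun a b => ε < dist a b) : s.Finite := by
  obtain ⟨t, htf, hcov⟩ := (Metric.totallyBounded_iff.mp hc.totallyBounded) (ε/2) (by linarith)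
  have key : ∀ x ∈ s, ∃ y ∈ t, x ∈ ball y (ε/2) := by
    intro x hx
    simpa using hcov (hsc hx)
  choose f hf1 hf2 using key
  have hinj : Set.InjOn (fun x : s => f x x.2) Set.univ := by
    intro a _ b _ hab
    by_contra hne
    have hne' : (a : α) ≠ b := fun h => hne (Subtype.ext h)
    have := hsep a.2 b.2 hne'
    have h1 := hf2 a a.2
    have h2 := hf2 b b.2
    simp only [hab] at h1
    simp only [mem_ball] at h1 h2
    have : dist (a:α) (b:α) ≤ dist (a:α) (f b b.2) + dist (b:α) (f b b.2) :=
      dist_triangle_right _ _ _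
    linarith
  have huniv : Set.Finite (Set.univ : Set s) :=
    Set.Finite.of_finite_image
      (Set.Finite.subset htf (by rintro y ⟨x, _, rfl⟩; exact hf1 x x.2)) hinj
  rw [← Set.finite_coe_iff]
  exact Set.finite_univ_iff.mp huniv

open Metric in
/-- Volume argument: a maximal (δ/2)-separated subset of the δ-ball has at least 2^K points. -/
lemma packing_lemma (K : ℕ) (δ : ℝ) (hδ : 0 < δ) :
    ∃ (s : Finset (EuclideanSpace ℝ (Fin K))),
      2 ^ K ≤ s.card ∧ (∀ x ∈ s, ‖x‖ ≤ δ) ∧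
      (s : Set (EuclideanSpace ℝ (Fin K))).Pairwise (fun a b => δ / 2 < dist a b) := by
  classical
  set E := EuclideanSpace ℝ (Fin K) with hE
  set 𝒮 : Set (Set E) := {s | s ⊆ closedBall 0 δ ∧ s.Pairwise fun a b => δ/2 < dist a b} with h𝒮
  have hZ : ∀ c ⊆ 𝒮, IsChain (· ⊆ ·) c → ∃ ub ∈ 𝒮, ∀ s ∈ c, s ⊆ ub := by
    intro c hc hchain
    refine ⟨⋃₀ c, ⟨?_, ?_⟩, fun s hs => Set.subset_sUnion_of_mem hs⟩
    · exact Set.sUnion_subset fun s hs => (hc hs).1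
    · intro a ha b hb hab
      obtain ⟨sa, hsa, ha⟩ := ha
      obtain ⟨sb, hsb, hb⟩ := hb
      rcases hchain.total hsa hsb with h | h
      · exact (hc hsb).2 (h ha) hb hab
      · exact (hc hsa).2 ha (h hb) hab
  obtain ⟨s, hsmax⟩ := zorn_subset 𝒮 hZ
  have hsS : s ∈ 𝒮 := hsmax.prop
  have hfin : s.Finite :=
    sep_finite (isCompact_closedBall (0:E) δ) hsS.1 (by linarith : (0:ℝ) < δ/2) hsS.2
  have hcov : ∀ z ∈ closedBall (0:E) δ, ∃ x ∈ s, dist z x ≤ δ/2 := by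
    intro z hz
    by_contra h
    push_neg at h
    have hins : insert z s ∈ 𝒮 := by
      refine ⟨Set.insert_subset hz hsS.1, ?_⟩
      rw [Set.pairwise_insert]
      exact ⟨hsS.2, fun b hb _ => ⟨h b hb, by rw [dist_comm]; exact h b hb⟩⟩
    have := hsmax.2 hins (Set.subset_insert z s) (Set.mem_insert z s)
    have := h z this
    simp at this
    linarith
  set F := hfin.toFinset with hF
  have hcov2 : closedBall (0:E) δ ⊆ ⋃ x ∈ F, closedBall x (δ/2) := by
    intro z hz
    obtain ⟨x, hx, hdx⟩ := hcov z hz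
    exact Set.mem_biUnion (hfin.mem_toFinset.mpr hx) (mem_closedBall.mpr hdx)
  have hμ : volume (closedBall (0:E) δ) ≤ ∑ x ∈ F, volume (closedBall x (δ/2)) :=
    (measure_mono hcov2).trans (measure_biUnion_finset_le F _)
  rw [Measure.addHaar_closedBall _ _ hδ.le] at hμ
  simp only [Measure.addHaar_closedBall _ _ (by linarith : (0:ℝ) ≤ δ/2)] at hμ
  rw [Finset.sum_const, nsmul_eq_mul, finrank_euclideanSpace_fin] at hμ
  set v := volume (ball (0:E) 1) with hv
  have hv0 : v ≠ 0 := (measure_ball_pos volume _ one_pos).ne'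
  have hvt : v ≠ ⊤ := measure_ball_lt_top.ne
  have hb0 : ENNReal.ofReal ((δ/2)^K) ≠ 0 := by
    simp [ENNReal.ofReal_eq_zero, not_le]
    positivity
  have hbt : ENNReal.ofReal ((δ/2)^K) ≠ ⊤ := ENNReal.ofReal_ne_top
  have hsplit : ENNReal.ofReal (δ^K) = ((2^K : ℕ) : ENNReal) * ENNReal.ofReal ((δ/2)^K) := by
    rw [← ENNReal.ofReal_natCast, ← ENNReal.ofReal_mul (by positivity)]
    congr 1
    push_cast
    rw [← mul_pow]
    ring_nf
  rw [hsplit, mul_assoc] at hμ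
  have hcard : 2^K ≤ F.card := by
    have h2 : ((2^K : ℕ) : ENNReal) ≤ (F.card : ENNReal) :=
      (ENNReal.mul_le_mul_iff_left (mul_ne_zero hb0 hv0) (ENNReal.mul_ne_top hbt hvt)).mp hμ
    exact_mod_cast h2
  refine ⟨F, hcard, ?_, ?_⟩
  · intro x hx
    have := hsS.1 (hfin.mem_toFinset.mp hx)
    rwa [mem_closedBall_zero_iff] at this
  · rw [hfin.coe_toFinset]
    exact hsS.2

/-- A `K`-dimensional subspace on which the quadratic form of a Hermitian matrix is bounded
below by the `K`-th largest eigenvalue. -/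
lemma spectral_subspace (d K : ℕ) (hK1 : 1 ≤ K) (hKd : K ≤ d)
    (N : Matrix (Fin d) (Fin d) ℝ) (hN : N.IsHermitian) :
    ∃ V : Submodule ℝ (EuclR d), Module.finrank ℝ V = K ∧
      ∀ x ∈ V, (hN.eigenvalues ∘ Tuple.sort hN.eigenvalues) ⟨d - K, by omega⟩ * ‖x‖^2
        ≤ ⟪x, Matrix.toEuclideanLin N x⟫ := by
  classical
  set σe := Tuple.sort hN.eigenvalues with hσe
  set B := hN.eigenvectorBasis.reindex σe.symm with hB
  set lam : Fin d → ℝ := hN.eigenvalues ∘ σe with hlam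
  have hmono : Monotone lam := Tuple.monotone_sort _
  have hBj : ∀ j, B j = hN.eigenvectorBasis (σe j) := by
    intro j; simp [hB]
  have heig : ∀ j, Matrix.toEuclideanLin N (B j) = lam j • B j := by
    intro j
    rw [hBj]
    have h := hN.mulVec_eigenvectorBasis (σe j)
    ext i
    have := congrFun h i
    simpa [Matrix.toEuclideanLin_apply, hlam] using this
  set j0 : Fin d := ⟨d - K, by omega⟩ with hj0
  set V : Submodule ℝ (EuclR d) := Submodule.span ℝ (Set.range (fun j : Set.Ici j0 => B j)) with hV
  have hsym := (Matrix.isHermitian_iff_isSymmetric.mp hN)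
  refine ⟨V, ?_, ?_⟩
  · rw [hV, finrank_span_eq_card]
    · rw [Fintype.card_Ici, Fin.card_Ici]
      simp only [hj0]
      omega
    · exact (B.orthonormal.linearIndependent).comp _ Subtype.coe_injective
  · intro x hx
    have hzero : ∀ j : Fin d, j ∉ Set.Ici j0 → ⟪B j, x⟫ = 0 := by
      intro j hj
      induction hx using Submodule.span_induction with
      | mem y hy =>
        obtain ⟨i, rfl⟩ := hy
        exact B.orthonormal.2 (fun h => hj (h ▸ i.2))
      | zero => exact inner_zero_right _
      | add y z _ _ hy hz => rw [inner_add_right, hy, hz, add_zero]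
      | smul c y _ hy => rw [inner_smul_right, hy, mul_zero]
    have hinner : ⟪x, Matrix.toEuclideanLin N x⟫ = ∑ j, lam j * ⟪B j, x⟫^2 := by
      rw [← B.sum_inner_mul_inner x (Matrix.toEuclideanLin N x)]
      refine Finset.sum_congr rfl fun j _ => ?_
      have h1 : ⟪B j, Matrix.toEuclideanLin N x⟫ = lam j * ⟪B j, x⟫ := by
        rw [← hsym (B j) x, heig j, inner_smul_left]
        simp
      rw [h1, real_inner_comm x (B j)]
      ring
    have hnorm : ‖x‖^2 = ∑ j, ⟪B j, x⟫^2 := by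
      have h2 := B.sum_inner_mul_inner x x
      rw [real_inner_self_eq_norm_sq] at h2
      rw [← h2]
      refine Finset.sum_congr rfl fun j _ => ?_
      rw [real_inner_comm x (B j)]; ring
    calc lam j0 * ‖x‖^2 = ∑ j, lam j0 * ⟪B j, x⟫^2 := by rw [hnorm, Finset.mul_sum]
      _ ≤ ∑ j, lam j * ⟪B j, x⟫^2 := by
          refine Finset.sum_le_sum fun j _ => ?_
          by_cases hj : j ∈ Set.Ici j0
          · exact mul_le_mul_of_nonneg_right (hmono hj) (sq_nonneg _)
          · rw [hzero j hj]; simp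
      _ = ⟪x, Matrix.toEuclideanLin N x⟫ := hinner.symm

lemma norm_sq_matVec (n d : ℕ) (A : Matrix (Fin n) (Fin d) ℝ) (x : EuclR d) :
    ⟪x, Matrix.toEuclideanLin (Aᵀ * A) x⟫ = ‖Matrix.toEuclideanLin A x‖^2 := by
  have hAt : Aᵀ = Aᴴ := by
    rw [conjTranspose_eq_transpose_of_trivial]
  have : Matrix.toEuclideanLin (Aᵀ * A) x
      = Matrix.toEuclideanLin Aᵀ (Matrix.toEuclideanLin A x) := by
    simp [Matrix.toEuclideanLin_apply, Matrix.mulVec_mulVec]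
  rw [this, hAt, Matrix.toEuclideanLin_conjTranspose_eq_adjoint,
    LinearMap.adjoint_inner_right, real_inner_self_eq_norm_sq]

lemma pyth (p : ℕ) (U : Submodule ℝ (EuclR p)) (v : EuclR p) :
    ‖projOn U v‖^2 = ‖v‖^2 - ‖perpCLM U v‖^2 := by
  have h := U.orthogonalProjectionFn_norm_sq v
  have h2 : perpCLM U v = v - U.orthogonalProjectionFn v := by
    simp [perpCLM, ContinuousLinearMap.sub_apply, Submodule.orthogonalProjectionFn_eq,
      -Submodule.coe_orthogonalProjectionOnto_apply]
  rw [h2]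
  rw [Submodule.orthogonalProjectionFn_eq] at *
  show ‖(U.orthogonalProjectionOnto v : EuclR p)‖^2 = _
  nlinarith [h]

set_option maxHeartbeats 2000000 in
/-- existence of a local packing for the Fano argument (Lemma on packing
numbers). σ_K² is the K-th largest eigenvalue of AᵀA. -/
theorem exists_packing (n d m : ℕ)
    (A : Matrix (Fin n) (Fin d) ℝ) (S : Matrix (Fin d) (Fin m) ℝ)
    (K : ℕ) (hK1 : 1 ≤ K) (hKd : K ≤ d)
    (hσ : ‖(perpCLM (ranM (A * S))).comp (matCLM A)‖ ^ 2
        < eigDesc (show (Aᵀ * A).IsHermitian by simpa using Matrix.isHermitian_conjTranspose_mul_self A) ⟨K - 1, by omega⟩)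
    (δ : ℝ) (hδ : 0 < δ)
    (hδ' : δ < Real.sqrt (eigDesc (show (Aᵀ * A).IsHermitian by simpa using Matrix.isHermitian_conjTranspose_mul_self A) ⟨K - 1, by omega⟩
        - ‖(perpCLM (ranM (A * S))).comp (matCLM A)‖ ^ 2)) :
    ∃ (M : ℕ) (x : Fin M → EuclR d),
      2 ^ K ≤ M ∧
      (∀ j, ‖x j‖ ≤ 1) ∧
      (∀ j k, j ≠ k →
        δ / 2 < ‖projOn (ranM (A * S)) (matVec A (x j)) - projOn (ranM (A * S)) (matVec A (x k))‖) ∧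
      (∀ j k,
        ‖projOn (ranM (A * S)) (matVec A (x j)) - projOn (ranM (A * S)) (matVec A (x k))‖ ≤ 2 * δ) := by
  classical
  have hN : (Aᵀ * A).IsHermitian := by simpa using Matrix.isHermitian_conjTranspose_mul_self A
  set U : Submodule ℝ (EuclR n) := ranM (A * S) with hU
  set Bc := (perpCLM U).comp (matCLM A) with hBc
  set lamK := eigDesc (hN) ⟨K - 1, by omega⟩ with hlamK
  have hpos : 0 < lamK - ‖Bc‖^2 := by linarith [hσ]
  set δK := Real.sqrt (lamK - ‖Bc‖^2) with hδK
  have hδK2 : δK^2 = lamK - ‖Bc‖^2 := Real.sq_sqrt hpos.le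
  have hδKpos : 0 < δK := Real.sqrt_pos.mpr hpos
  have hδδK : δ < δK := hδ'
  -- spectral subspace
  obtain ⟨V, hVdim, hVspec⟩ := spectral_subspace d K hK1 hKd (Aᵀ * A)
    (hN)
  have hlem : lamK = ((hN).eigenvalues ∘
      Tuple.sort (hN).eigenvalues) ⟨d - K, by omega⟩ := by
    have hrev : (Fin.rev (⟨K - 1, by omega⟩ : Fin d)) = ⟨d - K, by omega⟩ := by
      apply Fin.ext
      rw [Fin.val_rev]
      show d - (K - 1 + 1) = d - K
      omega
    rw [hlamK]
    show ((hN).eigenvalues ∘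
      Tuple.sort (hN).eigenvalues)
        (Fin.rev ⟨K - 1, by omega⟩) = _
    rw [hrev]
  -- the projected map
  set T : EuclR d →ₗ[ℝ] EuclR n :=
    (U.subtype.comp U.orthogonalProjectionOnto.toLinearMap).comp (Matrix.toEuclideanLin A) with hT
  have hTapp : ∀ x : EuclR d, T x = projOn U (matVec A x) := fun x => rfl
  have hTlow : ∀ x ∈ V, δK^2 * ‖x‖^2 ≤ ‖T x‖^2 := by
    intro x hx
    have h1 := hVspec x hx
    rw [norm_sq_matVec, ← hlem] at h1
    have h2 := pyth n U (Matrix.toEuclideanLin A x)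
    have h2' : ‖T x‖ = ‖projOn U (Matrix.toEuclideanLin A x)‖ := rfl
    have h3 : ‖Bc x‖ ≤ ‖Bc‖ * ‖x‖ := Bc.le_opNorm x
    have h3' : perpCLM U (Matrix.toEuclideanLin A x) = Bc x := rfl
    rw [h3'] at h2
    have h4 : ‖Bc x‖^2 ≤ (‖Bc‖ * ‖x‖)^2 := pow_le_pow_left₀ (norm_nonneg _) h3 2
    rw [h2', h2, hδK2]
    nlinarith [norm_nonneg (Bc x), norm_nonneg x]
  -- kernel of T restricted to V is trivial
  set T' := T.domRestrict V with hT'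
  have hker : LinearMap.ker T' = ⊥ := by
    rw [LinearMap.ker_eq_bot']
    rintro ⟨x, hx⟩ h0
    have hlow := hTlow x hx
    have h0' : T x = 0 := h0
    rw [h0', norm_zero] at hlow
    have hx0 : ‖x‖ = 0 := by
      by_contra hne
      have h' : 0 < ‖x‖ := lt_of_le_of_ne (norm_nonneg x) (Ne.symm hne)
      nlinarith [mul_pos (pow_pos hδKpos 2) (pow_pos h' 2)]
    exact Subtype.ext (norm_eq_zero.mp hx0)
  set W := LinearMap.range T' with hW
  have hWdim : Module.finrank ℝ W = K := by
    have hrk := LinearMap.finrank_range_add_finrank_ker T'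
    rw [hker, finrank_bot, add_zero] at hrk
    rw [hW, hrk, hVdim]
  -- isometry between W and EuclR K
  set bW := (stdOrthonormalBasis ℝ W).reindex (finCongr hWdim) with hbW
  set e : W ≃ₗᵢ[ℝ] EuclR K := bW.repr with he
  -- the packing
  obtain ⟨F, hcard, hFnorm, hFpair⟩ := packing_lemma K δ hδ
  set z : Fin F.card → EuclR K := fun j => (F.equivFin.symm j : EuclR K) with hz
  have hzmem : ∀ j, z j ∈ F := fun j => (F.equivFin.symm j).2
  have hzinj : Function.Injective z := by
    intro a b hab
    have := F.equivFin.symm.injective (Subtype.ext hab)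
    exact this
  set y : Fin F.card → W := fun j => e.symm (z j) with hy
  have hymem : ∀ j, (y j : EuclR n) ∈ W := fun j => (y j).2
  choose w hw using fun j => LinearMap.mem_range.mp (hymem j)
  set x : Fin F.card → EuclR d := fun j => ((w j : V) : EuclR d) with hx
  have hTx : ∀ j, T (x j) = (y j : EuclR n) := fun j => hw j
  have hxV : ∀ j, x j ∈ V := fun j => (w j).2
  have hynorm : ∀ j, ‖T (x j)‖ = ‖z j‖ := by
    intro j
    rw [hTx j]
    have h7 : ‖(y j : EuclR n)‖ = ‖y j‖ := rfl
    rw [h7, hy]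
    simp
  refine ⟨F.card, x, hcard, ?_, ?_, ?_⟩
  · intro j
    have hlow := hTlow (x j) (hxV j)
    have hzn : ‖z j‖ ≤ δ := hFnorm _ (hzmem j)
    have hTn := hynorm j
    have e1 : δK^2 * ‖x j‖^2 ≤ δ^2 := by
      refine hlow.trans ?_
      rw [hTn]
      exact pow_le_pow_left₀ (norm_nonneg _) hzn 2
    have e2 : δ^2 < δK^2 := by nlinarith
    by_contra hgt
    push_neg at hgt
    have h9 : 1 < ‖x j‖^2 := by nlinarith
    have h10 : δK^2 < δK^2 * ‖x j‖^2 := by nlinarith [pow_pos hδKpos 2]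
    linarith
  · intro j k hjk
    have hne : z j ≠ z k := fun h => hjk (hzinj h)
    have hp := hFpair (hzmem j) (hzmem k) hne
    have hdiff : projOn U (matVec A (x j)) - projOn U (matVec A (x k))
        = (y j : EuclR n) - (y k : EuclR n) := by
      rw [← hTapp, ← hTapp, hTx, hTx]
    rw [hdiff]
    have h8 : ‖(y j : EuclR n) - (y k : EuclR n)‖ = ‖y j - y k‖ := rfl
    rw [h8]
    have h6 : y j - y k = e.symm (z j - z k) := by rw [hy]; simp
    rw [h6, e.symm.norm_map, ← dist_eq_norm]
    exact hp
  · intro j k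
    have hdiff : projOn U (matVec A (x j)) - projOn U (matVec A (x k))
        = (y j : EuclR n) - (y k : EuclR n) := by
      rw [← hTapp, ← hTapp, hTx, hTx]
    rw [hdiff]
    have h8 : ‖(y j : EuclR n) - (y k : EuclR n)‖ = ‖y j - y k‖ := rfl
    rw [h8]
    have h6 : y j - y k = e.symm (z j - z k) := by rw [hy]; simp
    rw [h6, e.symm.norm_map]
    have := norm_sub_le (z j) (z k)
    have hj' : ‖z j‖ ≤ δ := hFnorm _ (hzmem j)
    have hk' : ‖z k‖ ≤ δ := hFnorm _ (hzmem k)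
    linarith
end
end
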